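/- Let 0 < q < 1, 0 < a < b, and let f, g : [0,b] → ℝ be increasing with Lipschitz-type bounds as above (positive constants l_f ≤ slopes of f ≤ L_f, l_g ≤ slopes of g ≤ L_g, with a²/b² ≤ l_f/L_f and a²/b² ≤ l_g/L_g). Then I_q(fg;a,b) ≥ (1/(b−a))·I_q(f;a,b)·I_q(g;a,b) − (ab/(b−a))·(f(b)−f(0))·(g(b)−g(0)). -/

import Mathlib

open scoped BigOperators
open Set

/-- Chebyshev-type bound for `I_q(·;a,b)` with correction term
`(ab/(b−a))·(f(b)−f(0))·(g(b)−g(0))`. -/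
theorem q_chebyshev_correction_b (q a b lf Lf lg Lg : ℝ) (f g : ℝ → ℝ)
    (hq0 : 0 < q) (hq1 : q < 1) (ha : 0 < a) (hab : a < b)
    (hlf : 0 < lf) (hLf : 0 < Lf) (hlg : 0 < lg) (hLg : 0 < Lg)
    (hrf : a ^ 2 / b ^ 2 ≤ lf / Lf) (hrg : a ^ 2 / b ^ 2 ≤ lg / Lg)
    (hfmono : MonotoneOn f (Icc 0 b)) (hgmono : MonotoneOn g (Icc 0 b))
    (hslopef : ∀ x ∈ Icc (0:ℝ) b, ∀ y ∈ Icc (0:ℝ) b, x ≠ y →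
      lf ≤ (f x - f y) / (x - y) ∧ (f x - f y) / (x - y) ≤ Lf)
    (hslopeg : ∀ x ∈ Icc (0:ℝ) b, ∀ y ∈ Icc (0:ℝ) b, x ≠ y →
      lg ≤ (g x - g y) / (x - y) ∧ (g x - g y) / (x - y) ≤ Lg) :
    (b * (1 - q) * ∑' n : ℕ, f (b * q ^ n) * g (b * q ^ n) * q ^ n) -
        (a * (1 - q) * ∑' n : ℕ, f (a * q ^ n) * g (a * q ^ n) * q ^ n) ≥
      (1 / (b - a)) *
          ((b * (1 - q) * ∑' n : ℕ, f (b * q ^ n) * q ^ n) -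
            (a * (1 - q) * ∑' n : ℕ, f (a * q ^ n) * q ^ n)) *
          ((b * (1 - q) * ∑' n : ℕ, g (b * q ^ n) * q ^ n) -
            (a * (1 - q) * ∑' n : ℕ, g (a * q ^ n) * q ^ n)) -
        (a * b / (b - a)) * (f b - f 0) * (g b - g 0) := by
  have hb : 0 < b := ha.trans hab
  have h1q : 0 < 1 - q := by linarith
  have hsq : Summable fun n : ℕ => q ^ n := summable_geometric_of_lt_one hq0.le hq1
  have hTq : (1 - q) * ∑' n : ℕ, q ^ n = 1 := by
    rw [tsum_geometric_of_lt_one hq0.le hq1]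
    field_simp
  set Tq : ℝ := ∑' n : ℕ, q ^ n with hTqdef
  -- membership of the sample points
  have hmem : ∀ c : ℝ, 0 < c → c ≤ b → ∀ n : ℕ, c * q ^ n ∈ Icc (0:ℝ) b := by
    intro c hc hcb n
    refine ⟨by positivity, ?_⟩
    calc c * q ^ n ≤ c * 1 :=
          mul_le_mul_of_nonneg_left (pow_le_one₀ hq0.le hq1.le) hc.le
      _ = c := mul_one c
      _ ≤ b := hcb
  have h0mem : (0:ℝ) ∈ Icc (0:ℝ) b := ⟨le_refl 0, hb.le⟩
  have hbmem : b ∈ Icc (0:ℝ) b := ⟨hb.le, le_refl b⟩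
  -- global bounds on f and g over [0,b]
  have hfrange : ∀ x ∈ Icc (0:ℝ) b, f 0 ≤ f x ∧ f x ≤ f b := fun x hx =>
    ⟨hfmono h0mem hx hx.1, hfmono hx hbmem hx.2⟩
  have hgrange : ∀ x ∈ Icc (0:ℝ) b, g 0 ≤ g x ∧ g x ≤ g b := fun x hx =>
    ⟨hgmono h0mem hx hx.1, hgmono hx hbmem hx.2⟩
  set Mf : ℝ := max |f 0| |f b| with hMf
  set Mg : ℝ := max |g 0| |g b| with hMg
  have hfabs : ∀ x ∈ Icc (0:ℝ) b, |f x| ≤ Mf := fun x hx =>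
    abs_le_max_abs_abs (hfrange x hx).1 (hfrange x hx).2
  have hgabs : ∀ x ∈ Icc (0:ℝ) b, |g x| ≤ Mg := fun x hx =>
    abs_le_max_abs_abs (hgrange x hx).1 (hgrange x hx).2
  -- generic summability of bounded sequences against the geometric weights
  have hsum0 : ∀ (F : ℕ → ℝ) (M : ℝ), (∀ n, |F n| ≤ M) →
      Summable (fun n : ℕ => F n * q ^ n) := by
    intro F M hM
    apply Summable.of_norm_bounded (hsq.mul_left M)
    intro n
    rw [Real.norm_eq_abs, abs_mul, abs_pow, abs_of_nonneg hq0.le]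
    exact mul_le_mul_of_nonneg_right (hM n) (by positivity)
  have hsumf : ∀ c : ℝ, 0 < c → c ≤ b → Summable (fun n : ℕ => f (c * q ^ n) * q ^ n) :=
    fun c hc hcb => hsum0 _ Mf (fun n => hfabs _ (hmem c hc hcb n))
  have hsumg : ∀ c : ℝ, 0 < c → c ≤ b → Summable (fun n : ℕ => g (c * q ^ n) * q ^ n) :=
    fun c hc hcb => hsum0 _ Mg (fun n => hgabs _ (hmem c hc hcb n))
  have hsumfg : ∀ c : ℝ, 0 < c → c ≤ b →
      Summable (fun n : ℕ => f (c * q ^ n) * g (c * q ^ n) * q ^ n) := by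
    intro c hc hcb
    refine hsum0 _ (Mf * Mg) (fun n => ?_)
    rw [abs_mul]
    have h1 := hfabs _ (hmem c hc hcb n)
    have h2 := hgabs _ (hmem c hc hcb n)
    exact mul_le_mul h1 h2 (abs_nonneg _) ((abs_nonneg _).trans h1)
  -- the inner-sum expansion
  have inner : ∀ c : ℝ, 0 < c → c ≤ b → ∀ d : ℝ, 0 < d → d ≤ b → ∀ m : ℕ,
      ∑' n : ℕ, (q ^ m * q ^ n) *
          ((f (c * q ^ m) - f (d * q ^ n)) * (g (c * q ^ m) - g (d * q ^ n)))
        = q ^ m * (f (c * q ^ m) * g (c * q ^ m) * Tq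
            - f (c * q ^ m) * ∑' n : ℕ, g (d * q ^ n) * q ^ n
            - g (c * q ^ m) * ∑' n : ℕ, f (d * q ^ n) * q ^ n
            + ∑' n : ℕ, f (d * q ^ n) * g (d * q ^ n) * q ^ n) := by
    intro c hc hcb d hd hdb m
    have hA : Summable (fun n : ℕ => f (c * q ^ m) * g (c * q ^ m) * q ^ n) :=
      hsq.mul_left _
    have hB : Summable (fun n : ℕ => f (c * q ^ m) * (g (d * q ^ n) * q ^ n)) :=
      (hsumg d hd hdb).mul_left _
    have hC : Summable (fun n : ℕ => g (c * q ^ m) * (f (d * q ^ n) * q ^ n)) :=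
      (hsumf d hd hdb).mul_left _
    have hD : Summable (fun n : ℕ => f (d * q ^ n) * g (d * q ^ n) * q ^ n) :=
      hsumfg d hd hdb
    calc ∑' n : ℕ, (q ^ m * q ^ n) *
          ((f (c * q ^ m) - f (d * q ^ n)) * (g (c * q ^ m) - g (d * q ^ n)))
        = ∑' n : ℕ, q ^ m *
            ((f (c * q ^ m) * g (c * q ^ m) * q ^ n
              - f (c * q ^ m) * (g (d * q ^ n) * q ^ n))
              - g (c * q ^ m) * (f (d * q ^ n) * q ^ n)
              + f (d * q ^ n) * g (d * q ^ n) * q ^ n) :=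
          tsum_congr (fun n => by ring)
      _ = q ^ m * ∑' n : ℕ,
            ((f (c * q ^ m) * g (c * q ^ m) * q ^ n
              - f (c * q ^ m) * (g (d * q ^ n) * q ^ n))
              - g (c * q ^ m) * (f (d * q ^ n) * q ^ n)
              + f (d * q ^ n) * g (d * q ^ n) * q ^ n) := tsum_mul_left
      _ = q ^ m * ((∑' n : ℕ, f (c * q ^ m) * g (c * q ^ m) * q ^ n
              - ∑' n : ℕ, f (c * q ^ m) * (g (d * q ^ n) * q ^ n))
              - ∑' n : ℕ, g (c * q ^ m) * (f (d * q ^ n) * q ^ n)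
              + ∑' n : ℕ, f (d * q ^ n) * g (d * q ^ n) * q ^ n) := by
            rw [Summable.tsum_add ((hA.sub hB).sub hC) hD, Summable.tsum_sub (hA.sub hB) hC, Summable.tsum_sub hA hB]
      _ = q ^ m * (f (c * q ^ m) * g (c * q ^ m) * Tq
            - f (c * q ^ m) * ∑' n : ℕ, g (d * q ^ n) * q ^ n
            - g (c * q ^ m) * ∑' n : ℕ, f (d * q ^ n) * q ^ n
            + ∑' n : ℕ, f (d * q ^ n) * g (d * q ^ n) * q ^ n) := by
            rw [tsum_mul_left, tsum_mul_left, tsum_mul_left, ← hTqdef]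
  -- the outer-sum expansion
  have outer : ∀ c : ℝ, 0 < c → c ≤ b → ∀ d : ℝ, 0 < d → d ≤ b →
      ∑' m : ℕ, ∑' n : ℕ, (q ^ m * q ^ n) *
          ((f (c * q ^ m) - f (d * q ^ n)) * (g (c * q ^ m) - g (d * q ^ n)))
        = (∑' n : ℕ, f (c * q ^ n) * g (c * q ^ n) * q ^ n) * Tq
            - (∑' n : ℕ, f (c * q ^ n) * q ^ n) * ∑' n : ℕ, g (d * q ^ n) * q ^ n
            - (∑' n : ℕ, g (c * q ^ n) * q ^ n) * ∑' n : ℕ, f (d * q ^ n) * q ^ n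
            + Tq * ∑' n : ℕ, f (d * q ^ n) * g (d * q ^ n) * q ^ n := by
    intro c hc hcb d hd hdb
    have hA : Summable (fun m : ℕ => f (c * q ^ m) * g (c * q ^ m) * q ^ m * Tq) :=
      (hsumfg c hc hcb).mul_right _
    have hB : Summable (fun m : ℕ =>
        (f (c * q ^ m) * q ^ m) * ∑' n : ℕ, g (d * q ^ n) * q ^ n) :=
      (hsumf c hc hcb).mul_right _
    have hC : Summable (fun m : ℕ =>
        (g (c * q ^ m) * q ^ m) * ∑' n : ℕ, f (d * q ^ n) * q ^ n) :=
      (hsumg c hc hcb).mul_right _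
    have hD : Summable (fun m : ℕ =>
        q ^ m * ∑' n : ℕ, f (d * q ^ n) * g (d * q ^ n) * q ^ n) :=
      hsq.mul_right _
    calc ∑' m : ℕ, ∑' n : ℕ, (q ^ m * q ^ n) *
          ((f (c * q ^ m) - f (d * q ^ n)) * (g (c * q ^ m) - g (d * q ^ n)))
        = ∑' m : ℕ, ((f (c * q ^ m) * g (c * q ^ m) * q ^ m * Tq
            - (f (c * q ^ m) * q ^ m) * ∑' n : ℕ, g (d * q ^ n) * q ^ n)
            - (g (c * q ^ m) * q ^ m) * ∑' n : ℕ, f (d * q ^ n) * q ^ n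
            + q ^ m * ∑' n : ℕ, f (d * q ^ n) * g (d * q ^ n) * q ^ n) := by
          refine tsum_congr (fun m => ?_)
          rw [inner c hc hcb d hd hdb m]
          ring
      _ = ((∑' m : ℕ, f (c * q ^ m) * g (c * q ^ m) * q ^ m * Tq)
            - ∑' m : ℕ, (f (c * q ^ m) * q ^ m) * ∑' n : ℕ, g (d * q ^ n) * q ^ n)
            - (∑' m : ℕ, (g (c * q ^ m) * q ^ m) * ∑' n : ℕ, f (d * q ^ n) * q ^ n)
            + ∑' m : ℕ, q ^ m * ∑' n : ℕ, f (d * q ^ n) * g (d * q ^ n) * q ^ n := by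
          rw [Summable.tsum_add ((hA.sub hB).sub hC) hD, Summable.tsum_sub (hA.sub hB) hC, Summable.tsum_sub hA hB]
      _ = (∑' n : ℕ, f (c * q ^ n) * g (c * q ^ n) * q ^ n) * Tq
            - (∑' n : ℕ, f (c * q ^ n) * q ^ n) * ∑' n : ℕ, g (d * q ^ n) * q ^ n
            - (∑' n : ℕ, g (c * q ^ n) * q ^ n) * ∑' n : ℕ, f (d * q ^ n) * q ^ n
            + Tq * ∑' n : ℕ, f (d * q ^ n) * g (d * q ^ n) * q ^ n := by
          rw [tsum_mul_right, tsum_mul_right, tsum_mul_right, tsum_mul_right, ← hTqdef]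
  -- nonnegativity of the diagonal double sums
  have diag_nonneg : ∀ c : ℝ, 0 < c → c ≤ b →
      (0:ℝ) ≤ ∑' m : ℕ, ∑' n : ℕ, (q ^ m * q ^ n) *
          ((f (c * q ^ m) - f (c * q ^ n)) * (g (c * q ^ m) - g (c * q ^ n))) := by
    intro c hc hcb
    refine tsum_nonneg fun m => tsum_nonneg fun n => ?_
    have hmm := hmem c hc hcb m
    have hnn := hmem c hc hcb n
    have hprod : 0 ≤ (f (c * q ^ m) - f (c * q ^ n)) * (g (c * q ^ m) - g (c * q ^ n)) := by
      rcases le_total (c * q ^ m) (c * q ^ n) with h | h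
      · have h1 := hfmono hmm hnn h
        have h2 := hgmono hmm hnn h
        nlinarith
      · have h1 := hfmono hnn hmm h
        have h2 := hgmono hnn hmm h
        nlinarith
    exact mul_nonneg (by positivity) hprod
  -- bounds on the increments
  have hdf : 0 ≤ f b - f 0 := sub_nonneg.mpr (hfmono h0mem hbmem hb.le)
  have hdg : 0 ≤ g b - g 0 := sub_nonneg.mpr (hgmono h0mem hbmem hb.le)
  have hprodbd : ∀ x ∈ Icc (0:ℝ) b, ∀ y ∈ Icc (0:ℝ) b,
      (f x - f y) * (g x - g y) ≤ (f b - f 0) * (g b - g 0) := by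
    intro x hx y hy
    have h1 : |f x - f y| ≤ f b - f 0 := by
      have hx1 := hfrange x hx; have hy1 := hfrange y hy
      rw [abs_sub_le_iff]; constructor <;> linarith [hx1.1, hx1.2, hy1.1, hy1.2]
    have h2 : |g x - g y| ≤ g b - g 0 := by
      have hx1 := hgrange x hx; have hy1 := hgrange y hy
      rw [abs_sub_le_iff]; constructor <;> linarith [hx1.1, hx1.2, hy1.1, hy1.2]
    calc (f x - f y) * (g x - g y) ≤ |(f x - f y) * (g x - g y)| := le_abs_self _
      _ = |f x - f y| * |g x - g y| := abs_mul _ _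
      _ ≤ (f b - f 0) * (g b - g 0) :=
          mul_le_mul h1 h2 (abs_nonneg _) ((abs_nonneg _).trans h1)
  -- bound for the cross double sum (c = b, d = a)
  have hcross_inner : ∀ m : ℕ,
      ∑' n : ℕ, (q ^ m * q ^ n) *
          ((f (b * q ^ m) - f (a * q ^ n)) * (g (b * q ^ m) - g (a * q ^ n)))
        ≤ ((f b - f 0) * (g b - g 0) * Tq) * q ^ m := by
    intro m
    have hmm := hmem b hb le_rfl m
    have hbound : ∀ n : ℕ,
        (q ^ m * q ^ n) *
            ((f (b * q ^ m) - f (a * q ^ n)) * (g (b * q ^ m) - g (a * q ^ n)))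
          ≤ (q ^ m * ((f b - f 0) * (g b - g 0))) * q ^ n := by
      intro n
      have h := hprodbd _ hmm _ (hmem a ha hab.le n)
      have hq : (0:ℝ) ≤ q ^ m * q ^ n := by positivity
      nlinarith [hq, h]
    have hbs : Summable (fun n : ℕ => (q ^ m * ((f b - f 0) * (g b - g 0))) * q ^ n) :=
      hsq.mul_left _
    have hls : Summable (fun n : ℕ => (q ^ m * q ^ n) *
        ((f (b * q ^ m) - f (a * q ^ n)) * (g (b * q ^ m) - g (a * q ^ n)))) := by
      apply Summable.of_norm_bounded hbs
      intro n
      rw [Real.norm_eq_abs, abs_mul]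
      have h1 : |f (b * q ^ m) - f (a * q ^ n)| ≤ f b - f 0 := by
        have hx1 := hfrange _ hmm; have hy1 := hfrange _ (hmem a ha hab.le n)
        rw [abs_sub_le_iff]; constructor <;> linarith [hx1.1, hx1.2, hy1.1, hy1.2]
      have h2 : |g (b * q ^ m) - g (a * q ^ n)| ≤ g b - g 0 := by
        have hx1 := hgrange _ hmm; have hy1 := hgrange _ (hmem a ha hab.le n)
        rw [abs_sub_le_iff]; constructor <;> linarith [hx1.1, hx1.2, hy1.1, hy1.2]
      have h3 : |(f (b * q ^ m) - f (a * q ^ n)) * (g (b * q ^ m) - g (a * q ^ n))|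
          ≤ (f b - f 0) * (g b - g 0) := by
        rw [abs_mul]
        exact mul_le_mul h1 h2 (abs_nonneg _) ((abs_nonneg _).trans h1)
      have h4 : |q ^ m * q ^ n| = q ^ m * q ^ n := abs_of_nonneg (by positivity)
      rw [h4]
      calc q ^ m * q ^ n * |(f (b * q ^ m) - f (a * q ^ n)) * (g (b * q ^ m) - g (a * q ^ n))|
          ≤ q ^ m * q ^ n * ((f b - f 0) * (g b - g 0)) :=
            mul_le_mul_of_nonneg_left h3 (by positivity)
        _ = q ^ m * ((f b - f 0) * (g b - g 0)) * q ^ n := by ring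
    calc ∑' n : ℕ, (q ^ m * q ^ n) *
          ((f (b * q ^ m) - f (a * q ^ n)) * (g (b * q ^ m) - g (a * q ^ n)))
        ≤ ∑' n : ℕ, (q ^ m * ((f b - f 0) * (g b - g 0))) * q ^ n :=
          Summable.tsum_le_tsum hbound hls hbs
      _ = (q ^ m * ((f b - f 0) * (g b - g 0))) * Tq := by rw [tsum_mul_left, hTqdef]
      _ = ((f b - f 0) * (g b - g 0) * Tq) * q ^ m := by ring
  have hcross : ∑' m : ℕ, ∑' n : ℕ, (q ^ m * q ^ n) *
        ((f (b * q ^ m) - f (a * q ^ n)) * (g (b * q ^ m) - g (a * q ^ n)))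
      ≤ ((f b - f 0) * (g b - g 0) * Tq) * Tq := by
    have houter_summ : Summable (fun m : ℕ => ∑' n : ℕ, (q ^ m * q ^ n) *
        ((f (b * q ^ m) - f (a * q ^ n)) * (g (b * q ^ m) - g (a * q ^ n)))) := by
      have hA : Summable (fun m : ℕ => f (b * q ^ m) * g (b * q ^ m) * q ^ m * Tq) :=
        (hsumfg b hb le_rfl).mul_right _
      have hB : Summable (fun m : ℕ =>
          (f (b * q ^ m) * q ^ m) * ∑' n : ℕ, g (a * q ^ n) * q ^ n) :=
        (hsumf b hb le_rfl).mul_right _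
      have hC : Summable (fun m : ℕ =>
          (g (b * q ^ m) * q ^ m) * ∑' n : ℕ, f (a * q ^ n) * q ^ n) :=
        (hsumg b hb le_rfl).mul_right _
      have hD : Summable (fun m : ℕ =>
          q ^ m * ∑' n : ℕ, f (a * q ^ n) * g (a * q ^ n) * q ^ n) :=
        hsq.mul_right _
      refine (((hA.sub hB).sub hC).add hD).congr fun m => ?_
      rw [inner b hb le_rfl a ha hab.le m]
      ring
    have hbs : Summable (fun m : ℕ => ((f b - f 0) * (g b - g 0) * Tq) * q ^ m) :=
      hsq.mul_left _
    calc ∑' m : ℕ, ∑' n : ℕ, (q ^ m * q ^ n) *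
          ((f (b * q ^ m) - f (a * q ^ n)) * (g (b * q ^ m) - g (a * q ^ n)))
        ≤ ∑' m : ℕ, ((f b - f 0) * (g b - g 0) * Tq) * q ^ m :=
          Summable.tsum_le_tsum hcross_inner houter_summ hbs
      _ = ((f b - f 0) * (g b - g 0) * Tq) * Tq := by rw [tsum_mul_left, hTqdef]
  -- assemble
  have hbb := diag_nonneg b hb le_rfl
  rw [outer b hb le_rfl b hb le_rfl] at hbb
  have haa := diag_nonneg a ha hab.le
  rw [outer a ha hab.le a ha hab.le] at haa
  rw [outer b hb le_rfl a ha hab.le] at hcross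
  set Pb := ∑' n : ℕ, f (b * q ^ n) * g (b * q ^ n) * q ^ n with hPb
  set Pa := ∑' n : ℕ, f (a * q ^ n) * g (a * q ^ n) * q ^ n with hPa
  set Fb := ∑' n : ℕ, f (b * q ^ n) * q ^ n with hFb
  set Fa := ∑' n : ℕ, f (a * q ^ n) * q ^ n with hFa
  set Gb := ∑' n : ℕ, g (b * q ^ n) * q ^ n with hGb
  set Ga := ∑' n : ℕ, g (a * q ^ n) * q ^ n with hGa
  have hba : (0:ℝ) < b - a := by linarith
  have m1 : Fb * Gb ≤ Tq * Pb := by linarith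
  have m2 : Fa * Ga ≤ Tq * Pa := by linarith
  have e1 : b ^ 2 * (1 - q) ^ 2 * (Fb * Gb) ≤ b ^ 2 * (1 - q) * Pb := by
    calc b ^ 2 * (1 - q) ^ 2 * (Fb * Gb)
        ≤ b ^ 2 * (1 - q) ^ 2 * (Tq * Pb) :=
          mul_le_mul_of_nonneg_left m1 (by positivity)
      _ = b ^ 2 * (1 - q) * Pb * ((1 - q) * Tq) := by ring
      _ = b ^ 2 * (1 - q) * Pb := by rw [hTq]; ring
  have e2 : a ^ 2 * (1 - q) ^ 2 * (Fa * Ga) ≤ a ^ 2 * (1 - q) * Pa := by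
    calc a ^ 2 * (1 - q) ^ 2 * (Fa * Ga)
        ≤ a ^ 2 * (1 - q) ^ 2 * (Tq * Pa) :=
          mul_le_mul_of_nonneg_left m2 (by positivity)
      _ = a ^ 2 * (1 - q) * Pa * ((1 - q) * Tq) := by ring
      _ = a ^ 2 * (1 - q) * Pa := by rw [hTq]; ring
  have e3 : a * b * (1 - q) * Pb + a * b * (1 - q) * Pa
      - a * b * (1 - q) ^ 2 * (Fb * Ga + Gb * Fa)
      ≤ a * b * ((f b - f 0) * (g b - g 0)) := by
    have h := mul_le_mul_of_nonneg_left hcross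
      (show (0:ℝ) ≤ a * b * (1 - q) ^ 2 by positivity)
    calc a * b * (1 - q) * Pb + a * b * (1 - q) * Pa
          - a * b * (1 - q) ^ 2 * (Fb * Ga + Gb * Fa)
        = (a * b * (1 - q) * Pb + a * b * (1 - q) * Pa) * ((1 - q) * Tq)
            - a * b * (1 - q) ^ 2 * (Fb * Ga + Gb * Fa) := by rw [hTq]; ring
      _ = a * b * (1 - q) ^ 2 * (Pb * Tq - Fb * Ga - Gb * Fa + Tq * Pa) := by ring
      _ ≤ a * b * (1 - q) ^ 2 * ((f b - f 0) * (g b - g 0) * Tq * Tq) := h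
      _ = a * b * ((f b - f 0) * (g b - g 0)) * ((1 - q) * Tq) * ((1 - q) * Tq) := by ring
      _ = a * b * ((f b - f 0) * (g b - g 0)) := by rw [hTq]; ring
  have key : (b * (1 - q) * Fb - a * (1 - q) * Fa) * (b * (1 - q) * Gb - a * (1 - q) * Ga)
      - a * b * (f b - f 0) * (g b - g 0)
      ≤ (b * (1 - q) * Pb - a * (1 - q) * Pa) * (b - a) := by linarith [e1, e2, e3]
  rw [ge_iff_le]
  calc 1 / (b - a) * (b * (1 - q) * Fb - a * (1 - q) * Fa)
          * (b * (1 - q) * Gb - a * (1 - q) * Ga)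
        - a * b / (b - a) * (f b - f 0) * (g b - g 0)
      = ((b * (1 - q) * Fb - a * (1 - q) * Fa) * (b * (1 - q) * Gb - a * (1 - q) * Ga)
          - a * b * (f b - f 0) * (g b - g 0)) * (1 / (b - a)) := by ring
    _ ≤ ((b * (1 - q) * Pb - a * (1 - q) * Pa) * (b - a)) * (1 / (b - a)) :=
        mul_le_mul_of_nonneg_right key (by positivity)
    _ = b * (1 - q) * Pb - a * (1 - q) * Pa := by
        field_simp
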